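/- (Lemma 3.4.) For every q ≥ 1 and every f ∈ N̂_σ(q−1), one has Ψ̂_n(∂_q(f)) = ∂_q(Ψ̂_n(f)); that is, the symbolic derivation ∂_q : N̂_σ(q−1) → N̂_σ(q) commutes with the evaluation homomorphisms Ψ̂_n. In particular, if Ψ̂_n(f) = 0 for all n ≥ 1, then Ψ̂_n(∂_q(f)) = 0 for all n ≥ 1. -/

import Mathlib

/-! Statement 10: (Lemma 3.4.) The symbolic derivation commutes with evaluation. -/

open scoped BigOperators
open Matrix

/-- Base names of letters: `Sum.inl k` is `x_k`, `Sum.inr (k, s)` is `y_{ks}`. -/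
abbrev HBase (d : ℕ) := Fin d ⊕ (Fin d × ℕ+)

/-- Letters of `M̂`: a base name together with a flag marking the transpose. -/
abbrev HLetter (d : ℕ) := HBase d × Bool

/-- The involution on letters: `z ↦ z^T`, `z^T ↦ z`. -/
def hTau {d : ℕ} (l : HLetter d) : HLetter d := (l.1, !l.2)

/-- The level of a letter: `0` for `x_k`, `x_k^T`, and `s` for `y_{ks}`, `y_{ks}^T`.
A word lies in `M̂(q)` iff all its letters have level `≤ q`. -/
def letterLevel {d : ℕ} (l : HLetter d) : ℕ :=
  match l.1 with
  | Sum.inl _ => 0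
  | Sum.inr (_, s) => s

/-- The transpose of a word: reverse it and apply the involution to each letter. -/
def wordT {A : Type*} (τ : A → A) (w : List A) : List A := (w.reverse).map τ

/-- The `m`-th power `e^m` of a word `e` (concatenation of `m` copies). -/
def wpow {A : Type*} (e : List A) (m : ℕ) : List A := (List.replicate m e).flatten

/-- A word is primitive if it is nonempty and is not a power `e^m` with `m ≥ 2`. -/
def WPrimitive {A : Type*} (w : List A) : Prop :=
  w ≠ [] ∧ ∀ (e : List A) (m : ℕ), 2 ≤ m → w ≠ wpow e m

/-- `a ∼ b`: `b` is a cyclic permutation of `a` or of `a^T`. -/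
def simRel {A : Type*} (τ : A → A) (a b : List A) : Prop :=
  List.IsRotated a b ∨ List.IsRotated a (wordT τ b)

/-- Primitive words in `M̂`. -/
def PrimWordH (d : ℕ) := {w : List (HLetter d) // WPrimitive w}

/-- `∼`-equivalence classes of primitive words of `M̂`. -/
def WClsH (d : ℕ) := Quot (fun a b : PrimWordH d => simRel hTau a.1 b.1)

/-- The polynomial algebra `N̂_σ` on indeterminates `σ_t(ā)`, `t ≥ 1`,
`ā` a `∼`-class of primitive words of `M̂`. -/
abbrev NsigmaH (F : Type*) [CommSemiring F] (d : ℕ) := MvPolynomial (ℕ+ × WClsH d) F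

/-- `tr(w) = σ_1(w̄)` for a primitive word `w` (and junk value `0` otherwise; all words
to which `tr` is applied below are primitive). -/
noncomputable def trW (F : Type*) [CommSemiring F] {d : ℕ} (w : List (HLetter d)) :
    NsigmaH F d := by
  classical exact
    if h : WPrimitive w then MvPolynomial.X (1, Quot.mk _ (⟨w, h⟩ : PrimWordH d)) else 0

/-- `σ_t(ā)` as an element of `N̂_σ`, with the convention `σ_0 = 1`. -/
noncomputable def sigVar (F : Type*) [CommSemiring F] {d : ℕ} (t : ℕ) (c : WClsH d) :
    NsigmaH F d :=
  if h : 0 < t then MvPolynomial.X ((⟨t, h⟩ : ℕ+), c) else 1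

/-- The list of words occurring in `∂_q(a) = Σ_j a_1 ⋯ ∂_q(a_j) ⋯ a_r` (a summand for
each position `j` holding a letter `x_k` or `x_k^T`, which is replaced by `y_{kq}` or
`y_{kq}^T`; positions holding `y`-letters contribute `0` and are omitted). -/
def derivWords {d : ℕ} (q : ℕ+) (a : List (HLetter d)) : List (List (HLetter d)) :=
  (List.range a.length).filterMap fun j =>
    match a[j]? with
    | some (Sum.inl k, b) => some (a.set j (Sum.inr (k, q), b))
    | _ => none

/-- The value of the symbolic derivation `∂_q` on the indeterminate `σ_t(ā)`:
`∂_q(σ_t(a)) = Σ_{i=0}^{t-1} (-1)^i tr(a^i ∂_q(a)) σ_{t-i-1}(a)`. -/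
noncomputable def dVal (F : Type*) [CommRing F] {d : ℕ} (q : ℕ+)
    (v : ℕ+ × WClsH d) : NsigmaH F d :=
  ∑ i ∈ Finset.range (v.1 : ℕ),
    (-1 : NsigmaH F d) ^ i *
      ((derivWords q (Quot.out v.2).1).map
          (fun w => trW F (wpow (Quot.out v.2).1 i ++ w))).sum *
        sigVar F ((v.1 : ℕ) - i - 1) v.2

/-- The symbolic derivation `∂_q : N̂_σ → N̂_σ` (defined on indeterminates by `dVal` and
extended by linearity and the Leibniz rule). -/
noncomputable def DS (F : Type*) [CommRing F] (d : ℕ) (q : ℕ+) :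
    Derivation F (NsigmaH F d) (NsigmaH F d) :=
  MvPolynomial.mkDerivation F (dVal F q)

/-- Variables of the polynomial ring `R̂_n`: `Sum.inl (i,j,k)` is `x_{ij}(k)` and
`Sum.inr (i,j,k,s)` is `y_{ij}(k,s)`. -/
abbrev VarHat (n d : ℕ) := (Fin n × Fin n × Fin d) ⊕ (Fin n × Fin n × Fin d × ℕ+)

/-- The polynomial ring `R̂_n = F[x_{ij}(k), y_{ij}(k,s)]`. -/
abbrev Rhat (F : Type*) [CommSemiring F] (n d : ℕ) := MvPolynomial (VarHat n d) F

/-- The derivation `∂_q(f) = Σ_k Σ_{i,j} (∂f/∂x_{ij}(k))·y_{ij}(k,q)` on `R̂_n`. -/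
noncomputable def Dq (F : Type*) [Field F] (n d : ℕ) (q : ℕ+) (f : Rhat F n d) :
    Rhat F n d :=
  ∑ k : Fin d, ∑ i : Fin n, ∑ j : Fin n,
    MvPolynomial.pderiv (Sum.inl (i, j, k)) f * MvPolynomial.X (Sum.inr (i, j, k, q))

/-- The matrix of a letter: generic matrices `X_k`, `Y_{ks}` and their transposes. -/
noncomputable def hLetterMat (F : Type*) [Field F] (n d : ℕ) (l : HLetter d) :
    Matrix (Fin n) (Fin n) (Rhat F n d) :=
  match l with
  | (Sum.inl k, false) => Matrix.of fun i j => MvPolynomial.X (Sum.inl (i, j, k))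
  | (Sum.inl k, true) => (Matrix.of fun i j =>
      (MvPolynomial.X (Sum.inl (i, j, k)) : Rhat F n d))ᵀ
  | (Sum.inr (k, s), false) => Matrix.of fun i j => MvPolynomial.X (Sum.inr (i, j, k, s))
  | (Sum.inr (k, s), true) => (Matrix.of fun i j =>
      (MvPolynomial.X (Sum.inr (i, j, k, s)) : Rhat F n d))ᵀ

/-- The matrix `X_a` of a word `a = a_1 ⋯ a_r` of `M̂`. -/
noncomputable def hWordMat (F : Type*) [Field F] (n d : ℕ) (w : List (HLetter d)) :
    Matrix (Fin n) (Fin n) (Rhat F n d) :=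
  (w.map (hLetterMat F n d)).prod

/-- `σ_t(A)`: the coefficient of `λ^{n-t}` in `det(A + λE)`. -/
noncomputable def msigma {R : Type*} [CommRing R] {ι : Type*} [Fintype ι] [DecidableEq ι]
    (t : ℕ) (A : Matrix ι ι R) : R :=
  ((A.map Polynomial.C + (Polynomial.X : Polynomial R) • 1).det).coeff (Fintype.card ι - t)

/-- The evaluation homomorphism `Ψ̂_n : N̂_σ → R̂_n`, sending `σ_t(ā)` to `σ_t(X_a)` if
`t ≤ n` and to `0` otherwise (it does not depend on the representative of `ā`). -/
noncomputable def PsiHat (F : Type*) [Field F] (n d : ℕ) :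
    NsigmaH F d →ₐ[F] Rhat F n d :=
  MvPolynomial.aeval fun v : ℕ+ × WClsH d =>
    if (v.1 : ℕ) ≤ n then msigma v.1 (hWordMat F n d (Quot.out v.2).1) else 0

section Aux
open Polynomial

section DerivDet
variable {R S : Type*} [CommRing R] [CommRing S] [Algebra R S] (D : Derivation R S S)

theorem Derivation.finset_prod' {ι : Type*} [DecidableEq ι] (s : Finset ι) (f : ι → S) :
    D (∏ i ∈ s, f i) = ∑ i ∈ s, (∏ j ∈ s.erase i, f j) * D (f i) := by
  induction s using Finset.induction_on with
  | empty => simp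
  | insert a s h ih =>
    rw [Finset.prod_insert h, D.leibniz, smul_eq_mul, smul_eq_mul, ih,
      Finset.sum_insert h, Finset.erase_insert h, Finset.mul_sum]
    rw [add_comm]
    congr 1
    refine Finset.sum_congr rfl fun i hi => ?_
    have hai : a ≠ i := fun hh => h (hh ▸ hi)
    rw [Finset.erase_insert_of_ne hai,
      Finset.prod_insert (fun hh => h (Finset.mem_of_mem_erase hh))]
    ring

theorem Derivation.matrix_det {n : ℕ} (M : Matrix (Fin n) (Fin n) S) :
    D M.det = Matrix.trace (M.adjugate * M.map D) := by
  have key : ∀ i, (M.updateCol i fun r => D (M r i)).det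
      = ∑ σ : Equiv.Perm (Fin n), Equiv.Perm.sign σ •
          ((∏ j ∈ Finset.univ.erase i, M (σ j) j) * D (M (σ i) i)) := by
    intro i
    rw [Matrix.det_apply]
    refine Finset.sum_congr rfl fun σ _ => ?_
    congr 1
    rw [← Finset.mul_prod_erase Finset.univ _ (Finset.mem_univ i),
      Matrix.updateCol_self, mul_comm]
    congr 1
    refine Finset.prod_congr rfl fun j hj => ?_
    rw [Matrix.updateCol_ne (Finset.ne_of_mem_erase hj)]
  have lhs : D M.det = ∑ i, (M.updateCol i fun r => D (M r i)).det := by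
    rw [Matrix.det_apply, map_sum]
    have step : ∀ σ : Equiv.Perm (Fin n), D (Equiv.Perm.sign σ • ∏ i, M (σ i) i)
        = ∑ i, Equiv.Perm.sign σ •
            ((∏ j ∈ Finset.univ.erase i, M (σ j) j) * D (M (σ i) i)) := by
      intro σ
      rw [Units.smul_def, map_zsmul, D.finset_prod', Finset.smul_sum]
      refine Finset.sum_congr rfl fun i _ => ?_
      rw [Units.smul_def]
    simp only [step]
    rw [Finset.sum_comm]
    exact Finset.sum_congr rfl fun i _ => (key i).symm
  rw [lhs]
  have cram : ∀ i, (M.updateCol i fun r => D (M r i)).det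
      = ∑ r, M.adjugate i r * D (M r i) := by
    intro i
    rw [← Matrix.cramer_apply, Matrix.cramer_eq_adjugate_mulVec]
    rfl
  simp only [cram]
  rw [Matrix.trace]
  refine Finset.sum_congr rfl fun i _ => ?_
  rw [Matrix.diag_apply, Matrix.mul_apply]
  rfl

noncomputable def Derivation.extX : Derivation R S[X] S[X] :=
  PolynomialModule.equivPolynomialSelf.compDer D.mapCoeffs

lemma Derivation.extX_coeff (p : S[X]) (i : ℕ) :
    (D.extX p).coeff i = D (p.coeff i) := rfl

lemma Derivation.extX_C (a : S) : D.extX (C a) = C (D a) := by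
  refine Polynomial.ext fun i => ?_
  rw [D.extX_coeff, coeff_C, coeff_C]
  split_ifs <;> simp

lemma Derivation.extX_X : D.extX (X : S[X]) = 0 := by
  refine Polynomial.ext fun i => ?_
  rw [D.extX_coeff, coeff_X]
  split_ifs <;> simp

lemma Derivation.matrix_map_mul {n : ℕ} (M N : Matrix (Fin n) (Fin n) S) :
    (M * N).map (⇑D) = M.map (⇑D) * N + M * N.map (⇑D) := by
  refine Matrix.ext fun i j => ?_
  rw [Matrix.map_apply, Matrix.mul_apply, map_sum, Matrix.add_apply, Matrix.mul_apply,
    Matrix.mul_apply, ← Finset.sum_add_distrib]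
  refine Finset.sum_congr rfl fun k _ => ?_
  rw [D.leibniz, smul_eq_mul, smul_eq_mul, Matrix.map_apply, Matrix.map_apply]
  ring

lemma Derivation.matrix_map_one {n : ℕ} :
    (1 : Matrix (Fin n) (Fin n) S).map (⇑D) = 0 := by
  refine Matrix.ext fun i j => ?_
  rw [Matrix.map_apply, Matrix.one_apply]
  split_ifs <;> simp

section CharAux
variable [Nontrivial S] {n : ℕ} (A : Matrix (Fin n) (Fin n) S)

lemma MeqCharmatrix : A.map C + (X : S[X]) • (1 : Matrix (Fin n) (Fin n) S[X])
    = Matrix.charmatrix (-A) := by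
  ext i j
  simp only [Matrix.charmatrix_apply, Matrix.add_apply, Matrix.smul_apply, Matrix.one_apply,
    Matrix.map_apply, Matrix.diagonal_apply, Matrix.neg_apply, map_neg, smul_eq_mul]
  split_ifs <;> ring

lemma detMP : (A.map C + (X : S[X]) • 1).det = Matrix.charpoly (-A) := by
  rw [MeqCharmatrix, Matrix.charpoly]

lemma msigma_eq (t : ℕ) : msigma t A = (Matrix.charpoly (-A)).coeff (n - t) := by
  rw [msigma, detMP, Fintype.card_fin]

lemma PnatDeg : (Matrix.charpoly (-A)).natDegree = n := by
  rw [Matrix.charpoly_natDegree_eq_dim, Fintype.card_fin]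

lemma chSum : ∑ i ∈ Finset.range (n+1),
    ((-1:S)^i * (Matrix.charpoly (-A)).coeff i) • A^i = 0 := by
  have h := Matrix.aeval_self_charpoly (-A)
  rw [Polynomial.aeval_eq_sum_range, PnatDeg] at h
  have e : ∀ i, (Matrix.charpoly (-A)).coeff i • (-A)^i
      = ((-1:S)^i * (Matrix.charpoly (-A)).coeff i) • A^i := by
    intro i
    have hpow : (-A)^i = (-1:S)^i • A^i := by
      rw [← neg_one_smul S A, _root_.smul_pow]
    rw [hpow, smul_smul, mul_comm ((Matrix.charpoly (-A)).coeff i)]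
  rw [← h]
  exact (Finset.sum_congr rfl fun i _ => (e i).symm)

noncomputable def qmat (p : ℕ) : Matrix (Fin n) (Fin n) S :=
  ∑ i ∈ Finset.range (n + 1 - p), ((-1:S)^i * (Matrix.charpoly (-A)).coeff (p+i)) • A^i

lemma qmat_zero : qmat A 0 = 0 := by
  rw [qmat]
  simpa using chSum A

lemma qmat_n : qmat A n = 1 := by
  rw [qmat]
  simp only [Nat.add_sub_cancel_left, show n + 1 - n = 1 from by omega]
  rw [Finset.sum_range_one]
  simp only [pow_zero, one_mul, add_zero]
  rw [show (Matrix.charpoly (-A)).coeff n = 1 from by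
    have := (Matrix.charpoly_monic (-A)).coeff_natDegree
    rwa [PnatDeg] at this]
  simp

lemma qmat_rec (p : ℕ) (hp : p ≤ n) :
    A * qmat A (p+1) = (Matrix.charpoly (-A)).coeff p • (1 : Matrix (Fin n) (Fin n) S)
      - qmat A p := by
  have h1 : n + 1 - p = (n - p) + 1 := by omega
  have h2 : n + 1 - (p+1) = n - p := by omega
  rw [qmat, qmat, h1, h2, Finset.sum_range_succ', Finset.mul_sum]
  have e1 : ∀ i, A * ((((-1:S))^i * (Matrix.charpoly (-A)).coeff (p+1+i)) • A^i)
      = (((-1:S))^i * (Matrix.charpoly (-A)).coeff (p+1+i)) • A^(i+1) := by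
    intro i; rw [mul_smul_comm, ← pow_succ']
  simp only [e1]
  have e2 : ∀ i, (((-1:S))^(i+1) * (Matrix.charpoly (-A)).coeff (p+(i+1))) • A^(i+1)
      = -(((((-1:S))^i * (Matrix.charpoly (-A)).coeff (p+1+i)) • A^(i+1))) := by
    intro i
    rw [← neg_smul]
    congr 1
    rw [show p+(i+1) = p+1+i from by omega, pow_succ]
    ring
  simp only [e2, Finset.sum_neg_distrib]
  simp only [pow_zero, one_mul, add_zero]
  abel

noncomputable def Qadj : Matrix (Fin n) (Fin n) S[X] :=
  ∑ p ∈ Finset.range n, (X:S[X])^p • (qmat A (p+1)).map C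

lemma smul_one_mapC (c : S) :
    (X:S[X])^p • ((c • (1 : Matrix (Fin n) (Fin n) S)).map C)
      = ((X:S[X])^p * C c) • (1 : Matrix (Fin n) (Fin n) S[X]) := by
  refine Matrix.ext fun i j => ?_
  simp only [Matrix.smul_apply, Matrix.map_apply, Matrix.one_apply, smul_eq_mul,
    apply_ite C]
  split_ifs <;> simp

lemma MQ : (A.map C + (X : S[X]) • 1) * Qadj A
    = Matrix.charpoly (-A) • (1 : Matrix (Fin n) (Fin n) S[X]) := by
  set P := Matrix.charpoly (-A) with hP
  set M := A.map C + (X : S[X]) • (1 : Matrix (Fin n) (Fin n) S[X]) with hM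
  rw [Qadj, Finset.mul_sum]
  have e1 : ∀ p ∈ Finset.range n, M * ((X:S[X])^p • (qmat A (p+1)).map C)
      = ((X:S[X])^p * C (P.coeff p)) • (1 : Matrix (Fin n) (Fin n) S[X])
        + (((X:S[X])^(p+1) • (qmat A (p+1)).map C) - ((X:S[X])^p • (qmat A p).map C)) := by
    intro p hp
    rw [Matrix.mul_smul, hM, Matrix.add_mul, ← Matrix.map_mul,
      qmat_rec A p (le_of_lt (Finset.mem_range.mp hp))]
    rw [Matrix.smul_mul, Matrix.one_mul, smul_add, Matrix.map_sub, smul_sub,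
      smul_one_mapC, smul_smul, ← pow_succ]
    · abel
    · exact fun a₁ a₂ => map_sub C a₁ a₂
  rw [Finset.sum_congr rfl e1, Finset.sum_add_distrib,
    Finset.sum_range_sub (fun p => (X:S[X])^p • (qmat A p).map C), qmat_zero, qmat_n]
  have h1 : ((1 : Matrix (Fin n) (Fin n) S).map (C : S →+* S[X]).toFun) = 1 :=
    Matrix.map_one _ (map_zero C) (map_one C)
  have h0 : ((0 : Matrix (Fin n) (Fin n) S).map (C : S →+* S[X]).toFun) = 0 :=
    Matrix.map_zero _ (map_zero C)
  rw [show ((1 : Matrix (Fin n) (Fin n) S).map (C : S → S[X])) = 1 from h1,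
    show ((0 : Matrix (Fin n) (Fin n) S).map (C : S → S[X])) = 0 from h0,
    smul_zero, sub_zero]
  have hcn : P.coeff n = 1 := by
    have := (Matrix.charpoly_monic (-A)).coeff_natDegree
    rwa [PnatDeg] at this
  have h2 : (X:S[X])^n • (1 : Matrix (Fin n) (Fin n) S[X])
      = ((X:S[X])^n * C (P.coeff n)) • (1 : Matrix (Fin n) (Fin n) S[X]) := by
    rw [hcn, _root_.map_one, mul_one]
  rw [h2, ← Finset.sum_range_succ
    (fun p => ((X:S[X])^p * C (P.coeff p)) • (1 : Matrix (Fin n) (Fin n) S[X])),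
    ← Finset.sum_smul]
  congr 1
  have hdeg : P.natDegree < n + 1 := by rw [PnatDeg]; omega
  calc ∑ p ∈ Finset.range (n+1), (X:S[X])^p * C (P.coeff p)
      = ∑ p ∈ Finset.range (n+1), (monomial p (P.coeff p) : S[X]) := by
        refine Finset.sum_congr rfl fun p _ => ?_
        rw [mul_comm, C_mul_X_pow_eq_monomial]
    _ = P := (Polynomial.as_sum_range' P (n+1) hdeg).symm

lemma adjugate_eq : (A.map C + (X:S[X]) • 1).adjugate = Qadj A := by
  set P := Matrix.charpoly (-A) with hP
  set M := A.map C + (X : S[X]) • (1 : Matrix (Fin n) (Fin n) S[X]) with hM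
  have h1 : M.adjugate * (M * Qadj A) = M.adjugate * (P • 1) := by rw [MQ]
  rw [← Matrix.mul_assoc, Matrix.adjugate_mul, detMP, ← hP] at h1
  have h2 : P • Qadj A = P • M.adjugate := by
    rw [Matrix.smul_mul, Matrix.one_mul] at h1
    rw [h1, Matrix.mul_smul, Matrix.mul_one]
  refine Matrix.ext fun i j => ?_
  have h3 := congrArg (fun N => N i j) h2
  simp only [Matrix.smul_apply, smul_eq_mul] at h3
  exact ((Matrix.charpoly_monic (-A)).isRegular.left h3).symm
lemma msigma_zero : msigma 0 A = 1 := by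
  rw [msigma_eq, Nat.sub_zero]
  have := (Matrix.charpoly_monic (-A)).coeff_natDegree
  rwa [PnatDeg] at this

lemma msigma_one (hn : 0 < n) : msigma 1 A = Matrix.trace A := by
  have : Nonempty (Fin n) := ⟨⟨0, hn⟩⟩
  rw [msigma_eq]
  have h := Matrix.trace_eq_neg_charpoly_coeff (-A)
  rw [Fintype.card_fin, Matrix.trace_neg] at h
  have := neg_injective h
  rw [← this]

lemma trace_mapC (N : Matrix (Fin n) (Fin n) S) :
    Matrix.trace (N.map C) = C (Matrix.trace N) := by
  rw [Matrix.trace, Matrix.trace, map_sum]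
  exact Finset.sum_congr rfl fun i _ => rfl

lemma trace_Qadj_mul (B : Matrix (Fin n) (Fin n) S) :
    Matrix.trace ((A.map C + (X:S[X]) • 1).adjugate * B.map C)
      = ∑ p ∈ Finset.range n, (X:S[X])^p * C (Matrix.trace (qmat A (p+1) * B)) := by
  rw [adjugate_eq, Qadj, Matrix.sum_mul, Matrix.trace_sum]
  refine Finset.sum_congr rfl fun p _ => ?_
  rw [Matrix.smul_mul, Matrix.trace_smul, ← Matrix.map_mul, trace_mapC, smul_eq_mul]

lemma trq (B : Matrix (Fin n) (Fin n) S) (p : ℕ) :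
    Matrix.trace (qmat A (p+1) * B)
      = ∑ i ∈ Finset.range (n - p),
          (-1:S)^i * (Matrix.charpoly (-A)).coeff (p+1+i) * Matrix.trace (A^i * B) := by
  rw [qmat, show n + 1 - (p+1) = n - p from by omega, Matrix.sum_mul, Matrix.trace_sum]
  refine Finset.sum_congr rfl fun i _ => ?_
  rw [Matrix.smul_mul, Matrix.trace_smul, smul_eq_mul, mul_assoc]

lemma deriv_msigma_trunc {t : ℕ} (ht : 0 < t) (hn : 0 < n) (B : Matrix (Fin n) (Fin n) S)
    (hB : ∀ i j, B i j = D (A i j)) :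
    D (if t ≤ n then msigma t A else 0)
      = ∑ i ∈ Finset.range t, (-1:S)^i * Matrix.trace (A^i * B) *
          (if t - 1 - i ≤ n then msigma (t-1-i) A else 0) := by
  set P := Matrix.charpoly (-A) with hP
  set M := A.map C + (X : S[X]) • (1 : Matrix (Fin n) (Fin n) S[X]) with hM
  have hdet : M.det = P := detMP A
  have hMmap : M.map (⇑(D.extX)) = B.map C := by
    refine Matrix.ext fun i j => ?_
    have hentry : M i j = C (A i j) + (if i = j then (X:S[X]) else 0) := by
      simp [hM, Matrix.one_apply, mul_ite, mul_one, mul_zero, smul_eq_mul]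
    rw [Matrix.map_apply, hentry, map_add, D.extX_C, Matrix.map_apply, hB i j]
    by_cases h : i = j <;> simp [h, D.extX_X]
  by_cases hcase : t ≤ n
  · rw [if_pos hcase]
    calc D (msigma t A) = ((D.extX) M.det).coeff (n-t) := by
          rw [msigma_eq, D.extX_coeff, hdet]
      _ = (Matrix.trace (M.adjugate * M.map (⇑(D.extX)))).coeff (n - t) := by
          rw [D.extX.matrix_det M]
      _ = (∑ p ∈ Finset.range n, (X:S[X])^p * C (Matrix.trace (qmat A (p+1) * B))).coeff (n-t) := by
          rw [hMmap, hM, trace_Qadj_mul]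
      _ = Matrix.trace (qmat A (n-t+1) * B) := by
          rw [Polynomial.finset_sum_coeff, Finset.sum_eq_single (n-t)]
          · rw [mul_comm, coeff_C_mul, coeff_X_pow, if_pos rfl, mul_one]
          · intro p hp hne
            rw [mul_comm, coeff_C_mul, coeff_X_pow, if_neg (fun h => hne h.symm), mul_zero]
          · intro h
            exact absurd (Finset.mem_range.mpr (by omega)) h
      _ = ∑ i ∈ Finset.range t, (-1:S)^i * Matrix.trace (A^i * B) *
            (if t - 1 - i ≤ n then msigma (t-1-i) A else 0) := by
          rw [trq, show n - (n - t) = t from by omega]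
          refine Finset.sum_congr rfl fun i hi => ?_
          have hi' := Finset.mem_range.mp hi
          rw [if_pos (show t - 1 - i ≤ n by omega), msigma_eq,
            show n - (t-1-i) = n-t+1+i from by omega]
          ring
  · rw [if_neg hcase, map_zero]
    symm
    set o := t - 1 - n with ho
    have hzero : ∀ i ∈ Finset.Ico 0 o, (-1:S)^i * Matrix.trace (A^i*B) *
        (if t-1-i ≤ n then msigma (t-1-i) A else 0) = 0 := by
      intro i hi
      have := (Finset.mem_Ico.mp hi).2
      rw [if_neg (by omega), mul_zero]
    rw [Finset.range_eq_Ico, ← Finset.sum_Ico_consecutive _ (Nat.zero_le o) (by omega : o ≤ t),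
      Finset.sum_eq_zero hzero, zero_add, Finset.sum_Ico_eq_sum_range,
      show t - o = n + 1 from by omega]
    calc ∑ j ∈ Finset.range (n+1), (-1:S)^(o+j) * Matrix.trace (A^(o+j) * B) *
            (if t-1-(o+j) ≤ n then msigma (t-1-(o+j)) A else 0)
        = ∑ j ∈ Finset.range (n+1),
            (-1:S)^o * Matrix.trace ((((-1:S)^j * P.coeff j) • A^j) * (A^o * B)) := by
          refine Finset.sum_congr rfl fun j hj => ?_
          have hj' := Finset.mem_range.mp hj
          rw [if_pos (show t-1-(o+j) ≤ n by omega), msigma_eq,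
            show n - (t-1-(o+j)) = j from by omega,
            Matrix.smul_mul, Matrix.trace_smul, smul_eq_mul,
            show A^(o+j) * B = A^j * (A^o * B) from by
              rw [← Matrix.mul_assoc, ← pow_mul_comm, ← pow_add],
            pow_add]
          ring
      _ = (-1:S)^o * Matrix.trace
            ((∑ j ∈ Finset.range (n+1), ((-1:S)^j * P.coeff j) • A^j) * (A^o * B)) := by
          rw [Matrix.sum_mul, Matrix.trace_sum, Finset.mul_sum]
      _ = 0 := by rw [chSum]; simp

end CharAux

end DerivDet

section WordAux
open MvPolynomial
variable (F : Type*) [Field F] (n d : ℕ) (q : ℕ+)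

noncomputable def DqDer : Derivation F (Rhat F n d) (Rhat F n d) :=
  ∑ k : Fin d, ∑ i : Fin n, ∑ j : Fin n,
    (MvPolynomial.X (Sum.inr (i, j, k, q)) : Rhat F n d) •
      (MvPolynomial.pderiv (R := F) (Sum.inl (i, j, k)))

lemma deriv_sum_apply {ι : Type} (s : Finset ι)
    (Ds : ι → Derivation F (Rhat F n d) (Rhat F n d)) (x : Rhat F n d) :
    (∑ i ∈ s, Ds i) x = ∑ i ∈ s, Ds i x := by
  classical
  induction s using Finset.cons_induction with
  | empty => rfl
  | cons a s ha ih => rw [Finset.sum_cons, Derivation.add_apply, ih, Finset.sum_cons]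

lemma DqDer_apply (f : Rhat F n d) : Dq F n d q f = DqDer F n d q f := by
  rw [Dq, DqDer, deriv_sum_apply]
  refine Finset.sum_congr rfl fun k _ => ?_
  rw [deriv_sum_apply]
  refine Finset.sum_congr rfl fun i _ => ?_
  rw [deriv_sum_apply]
  refine Finset.sum_congr rfl fun j _ => ?_
  rw [Derivation.smul_apply, smul_eq_mul, mul_comm]

lemma DqDer_X_inl (i j : Fin n) (k : Fin d) :
    DqDer F n d q (MvPolynomial.X (Sum.inl (i, j, k)))
      = MvPolynomial.X (Sum.inr (i, j, k, q)) := by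
  rw [← DqDer_apply, Dq]
  simp only [MvPolynomial.pderiv_X, Pi.single_apply]
  simp [Finset.sum_ite_eq', Finset.sum_ite_eq, Prod.ext_iff, apply_ite,
    ite_and, Sum.inl.injEq]

lemma DqDer_X_inr (v : Fin n × Fin n × Fin d × ℕ+) :
    DqDer F n d q (MvPolynomial.X (Sum.inr v)) = 0 := by
  rw [← DqDer_apply, Dq]
  simp [MvPolynomial.pderiv_X]

lemma hWordMat_nil : hWordMat F n d [] = 1 := rfl

lemma hWordMat_cons (l : HLetter d) (a : List (HLetter d)) :
    hWordMat F n d (l :: a) = hLetterMat F n d l * hWordMat F n d a := by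
  rw [hWordMat, hWordMat, List.map_cons, List.prod_cons]

lemma hWordMat_append (u v : List (HLetter d)) :
    hWordMat F n d (u ++ v) = hWordMat F n d u * hWordMat F n d v := by
  rw [hWordMat, hWordMat, hWordMat, List.map_append, List.prod_append]

lemma hWordMat_wpow (a : List (HLetter d)) (i : ℕ) :
    hWordMat F n d (wpow a i) = hWordMat F n d a ^ i := by
  induction i with
  | zero => rfl
  | succ i ih =>
    rw [wpow, List.replicate_succ, List.flatten_cons, hWordMat_append,
      show (List.replicate i a).flatten = wpow a i from rfl, ih, pow_succ']

lemma hLetterMat_tau (l : HLetter d) :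
    hLetterMat F n d (hTau l) = (hLetterMat F n d l)ᵀ := by
  rcases l with ⟨k | ⟨k, s⟩, b⟩ <;> cases b <;>
    simp [hTau, hLetterMat, Matrix.transpose_transpose]

lemma hWordMat_wordT (w : List (HLetter d)) :
    hWordMat F n d (wordT hTau w) = (hWordMat F n d w)ᵀ := by
  rw [wordT, hWordMat, hWordMat, Matrix.transpose_list_prod]
  have hrev : (List.map transpose (List.map (hLetterMat F n d) w)).reverse
      = List.map (transpose ∘ hLetterMat F n d) w.reverse := by simp [List.map_map]
  rw [hrev, List.map_map]
  congr 1
  refine List.map_congr_left fun l _ => ?_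
  simp only [Function.comp_apply]
  exact hLetterMat_tau F n d l

lemma trace_rotate (w : List (HLetter d)) (m : ℕ) :
    Matrix.trace (hWordMat F n d (w.rotate m)) = Matrix.trace (hWordMat F n d w) := by
  rcases eq_or_ne w [] with h | h
  · subst h; rw [List.rotate_nil]
  · have hlen : 0 < w.length := List.length_pos_iff.mpr h
    rw [← List.rotate_mod, List.rotate_eq_drop_append_take (le_of_lt (Nat.mod_lt _ hlen)),
      hWordMat_append, Matrix.trace_mul_comm, ← hWordMat_append, List.take_append_drop]

lemma trace_simRel {u w : List (HLetter d)} (h : simRel hTau u w) :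
    Matrix.trace (hWordMat F n d u) = Matrix.trace (hWordMat F n d w) := by
  rcases h with ⟨m, hm⟩ | ⟨m, hm⟩
  · rw [← hm, trace_rotate]
  · rw [← Matrix.trace_transpose (hWordMat F n d w), ← hWordMat_wordT, ← hm, trace_rotate]

lemma trace_eqvGen {x y : PrimWordH d}
    (h : Relation.EqvGen (fun a b : PrimWordH d => simRel hTau a.1 b.1) x y) :
    Matrix.trace (hWordMat F n d x.1) = Matrix.trace (hWordMat F n d y.1) := by
  induction h with
  | rel a b hab => exact trace_simRel F n d hab
  | refl a => rfl
  | symm a b _ ih => exact ih.symm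
  | trans a b c _ _ ih1 ih2 => exact ih1.trans ih2

lemma trace_out (c : WClsH d) (pw : PrimWordH d)
    (h : Quot.mk (fun a b : PrimWordH d => simRel hTau a.1 b.1) pw = c) :
    Matrix.trace (hWordMat F n d (Quot.out c).1) = Matrix.trace (hWordMat F n d pw.1) := by
  have h2 : Quot.mk (fun a b : PrimWordH d => simRel hTau a.1 b.1) (Quot.out c)
      = Quot.mk (fun a b : PrimWordH d => simRel hTau a.1 b.1) pw := by
    exact (Quot.out_eq c).trans h.symm
  exact trace_eqvGen F n d (Quot.eq.mp h2)

end WordAux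

section DerivWordsAux
variable (F : Type*) [Field F] (n d : ℕ) (q : ℕ+)

lemma derivWords_nil : derivWords q ([] : List (HLetter d)) = [] := rfl

lemma derivWords_cons_inl (k : Fin d) (b : Bool) (a : List (HLetter d)) :
    derivWords q ((Sum.inl k, b) :: a)
      = ((Sum.inr (k, q), b) :: a) :: (derivWords q a).map ((Sum.inl k, b) :: ·) := by
  rw [derivWords, derivWords, List.length_cons, List.range_succ_eq_map, List.filterMap_cons]
  simp only [List.getElem?_cons_zero, List.getElem?_cons_succ, List.set_cons_zero,
    List.set_cons_succ, List.filterMap_map, List.map_filterMap]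
  congr 1
  refine List.filterMap_congr fun j hj => ?_
  rcases h : a[j]? with _ | ⟨⟨k2 | ks2, b2⟩⟩ <;> simp [h, Function.comp]

lemma derivWords_cons_inr (ks : Fin d × ℕ+) (b : Bool) (a : List (HLetter d)) :
    derivWords q ((Sum.inr ks, b) :: a)
      = (derivWords q a).map ((Sum.inr ks, b) :: ·) := by
  rw [derivWords, derivWords, List.length_cons, List.range_succ_eq_map, List.filterMap_cons]
  simp only [List.getElem?_cons_zero, List.getElem?_cons_succ, List.set_cons_zero,
    List.set_cons_succ, List.filterMap_map, List.map_filterMap]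
  refine List.filterMap_congr fun j hj => ?_
  rcases h : a[j]? with _ | ⟨⟨k2 | ks2, b2⟩⟩ <;> simp [h, Function.comp]

lemma matrix_mul_list_sum {S : Type*} [CommRing S] (M : Matrix (Fin n) (Fin n) S)
    (L : List (Matrix (Fin n) (Fin n) S)) :
    M * L.sum = (L.map (fun N => M * N)).sum := by
  induction L with
  | nil => simp
  | cons h t ih => simp only [List.sum_cons, List.map_cons, mul_add, ih]

lemma trace_list_sum {S : Type*} [CommRing S] (L : List (Matrix (Fin n) (Fin n) S)) :
    Matrix.trace L.sum = (L.map Matrix.trace).sum := by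
  induction L with
  | nil => simp
  | cons h t ih => simp only [List.sum_cons, List.map_cons, Matrix.trace_add, ih]

lemma mapD_hLetterMat_inl (k : Fin d) (b : Bool) :
    (hLetterMat F n d (Sum.inl k, b)).map (⇑(DqDer F n d q))
      = hLetterMat F n d (Sum.inr (k, q), b) := by
  cases b <;> refine Matrix.ext fun i j => ?_ <;>
    simp [hLetterMat, Matrix.map_apply, Matrix.transpose_apply, DqDer_X_inl]

lemma mapD_hLetterMat_inr (ks : Fin d × ℕ+) (b : Bool) :
    (hLetterMat F n d (Sum.inr ks, b)).map (⇑(DqDer F n d q)) = 0 := by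
  cases b <;> refine Matrix.ext fun i j => ?_ <;>
    simp [hLetterMat, Matrix.map_apply, Matrix.transpose_apply, DqDer_X_inr]

lemma mapD_hWordMat (a : List (HLetter d)) :
    (hWordMat F n d a).map (⇑(DqDer F n d q))
      = ((derivWords q a).map (hWordMat F n d)).sum := by
  induction a with
  | nil => rw [hWordMat_nil, derivWords_nil]; exact (DqDer F n d q).matrix_map_one
  | cons l a ih =>
    have hmapmap : ∀ l' : HLetter d, ((derivWords q a).map (l' :: ·)).map (hWordMat F n d)
        = ((derivWords q a).map (hWordMat F n d)).map (fun N => hLetterMat F n d l' * N) := by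
      intro l'
      rw [List.map_map, List.map_map]
      exact List.map_congr_left fun w _ => hWordMat_cons F n d l' w
    rcases l with ⟨k | ks, b⟩
    · rw [hWordMat_cons, (DqDer F n d q).matrix_map_mul, derivWords_cons_inl,
        List.map_cons, List.sum_cons, ih, mapD_hLetterMat_inl, hWordMat_cons,
        hmapmap, ← matrix_mul_list_sum]
    · rw [hWordMat_cons, (DqDer F n d q).matrix_map_mul, derivWords_cons_inr,
        mapD_hLetterMat_inr, Matrix.zero_mul, zero_add, ih,
        hmapmap, ← matrix_mul_list_sum]

lemma derivWords_mem {a w : List (HLetter d)} (hw : w ∈ derivWords q a) :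
    ∃ j k b, j < a.length ∧ a[j]? = some (Sum.inl k, b)
      ∧ w = a.set j (Sum.inr (k, q), b) := by
  rw [derivWords, List.mem_filterMap] at hw
  obtain ⟨j, hj, hmatch⟩ := hw
  rw [List.mem_range] at hj
  rcases h : a[j]? with _ | ⟨⟨k | ks, b⟩⟩ <;> rw [h] at hmatch
  · exact absurd hmatch (by simp)
  · exact ⟨j, k, b, hj, h, (Option.some.inj hmatch).symm⟩
  · exact absurd hmatch (by simp)

lemma prim_derivWord {a w : List (HLetter d)} (ha : a ≠ [])
    (hlev : ∀ l ∈ a, letterLevel l < (q:ℕ)) (hw : w ∈ derivWords q a) (i : ℕ) :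
    WPrimitive (wpow a i ++ w) := by
  classical
  obtain ⟨j, k, b, hj, hgot, hwe⟩ := derivWords_mem (d := d) (q := q) hw
  set p : HLetter d → Bool := fun l => decide (letterLevel l = (q:ℕ)) with hp
  have hpa : ∀ l ∈ a, ¬ p l := by
    intro l hl
    simp only [hp, decide_eq_true_eq]
    exact Nat.ne_of_lt (hlev l hl)
  have hcount_a : a.countP p = 0 := List.countP_eq_zero.mpr hpa
  have hwlen : w.length = a.length := by rw [hwe, List.length_set]
  have hcount_w : w.countP p = 1 := by
    rw [hwe, List.set_eq_take_cons_drop _ hj, List.countP_append, List.countP_cons]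
    have h1 : (a.take j).countP p = 0 :=
      List.countP_eq_zero.mpr fun l hl => hpa l (List.mem_of_mem_take hl)
    have h2 : (a.drop (j+1)).countP p = 0 :=
      List.countP_eq_zero.mpr fun l hl => hpa l (List.mem_of_mem_drop hl)
    have h3 : p (Sum.inr (k, q), b) = true := by simp [hp, letterLevel]
    rw [h1, h2, h3]
    simp
  have hcount_pow : ∀ m (e : List (HLetter d)), (wpow e m).countP p = m * e.countP p := by
    intro m e
    rw [wpow, List.countP_flatten, List.map_replicate, List.sum_replicate, smul_eq_mul]
  have hcount_u : (wpow a i ++ w).countP p = 1 := by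
    rw [List.countP_append, hcount_pow, hcount_a, hcount_w]
    simp
  constructor
  · intro h
    obtain ⟨-, h2⟩ := List.append_eq_nil_iff.mp h
    apply ha
    have : a.length = 0 := by rw [← hwlen, h2]; rfl
    exact List.length_eq_zero_iff.mp this
  · intro e m hm heq
    rw [heq, hcount_pow] at hcount_u
    have hdvd : m ∣ 1 := hcount_u ▸ dvd_mul_right m (e.countP p)
    have := Nat.le_of_dvd Nat.one_pos hdvd
    omega

end DerivWordsAux

section FinalAux
variable (F : Type*) [Field F] {n d : ℕ} (q : ℕ+)

lemma PsiHat_X (v : ℕ+ × WClsH d) :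
    PsiHat F n d (MvPolynomial.X v)
      = if (v.1 : ℕ) ≤ n then msigma v.1 (hWordMat F n d (Quot.out v.2).1) else 0 :=
  MvPolynomial.aeval_X _ v

lemma PsiHat_trW (hn : 0 < n) (u : List (HLetter d)) (hu : WPrimitive u) :
    PsiHat F n d (trW F u) = Matrix.trace (hWordMat F n d u) := by
  have : trW F u = MvPolynomial.X ((1 : ℕ+), Quot.mk _ (⟨u, hu⟩ : PrimWordH d)) := by
    simp only [trW, dif_pos hu]; rfl
  rw [this]; erw [PsiHat_X]; rw [ if_pos (show ((1:ℕ+) : ℕ) ≤ n from hn)]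
  rw [show ((1:ℕ+) : ℕ) = 1 from rfl, msigma_one _ hn]
  exact trace_out F n d _ ⟨u, hu⟩ rfl

lemma PsiHat_sigVar (hn : 0 < n) (s : ℕ) (c : WClsH d) :
    PsiHat F n d (sigVar F s c)
      = if s ≤ n then msigma s (hWordMat F n d (Quot.out c).1) else 0 := by
  rw [sigVar]
  by_cases hs : 0 < s
  · rw [dif_pos hs, PsiHat_X]
    rfl
  · have hs0 : s = 0 := by omega
    subst hs0
    rw [dif_neg hs, _root_.map_one, if_pos (Nat.zero_le n), msigma_zero]

end FinalAux

end Aux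

/-- **Lemma 3.4.** For `q ≥ 1` and `f ∈ N̂_σ(q-1)` (i.e. every word occurring in `f`
has all letters of level `≤ q-1`), the symbolic derivation commutes with the
evaluation homomorphisms: `Ψ̂_n(∂_q(f)) = ∂_q(Ψ̂_n(f))` for every `n ≥ 1`.
In particular, if `f` is a free relation then so is `∂_q(f)`. -/
theorem PsiHat_DS_comm (F : Type*) [Field F] (hchar : ringChar F ≠ 2)
    (d : ℕ) (hd : 1 ≤ d) (q : ℕ+) (f : NsigmaH F d)
    (hlev : ∀ u ∈ f.support, ∀ v ∈ u.support, ∀ l ∈ (Quot.out v.2).1,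
      letterLevel l ≤ (q : ℕ) - 1) :
    (∀ n : ℕ, 1 ≤ n → PsiHat F n d (DS F d q f) = Dq F n d q (PsiHat F n d f)) ∧
      ((∀ n : ℕ, 1 ≤ n → PsiHat F n d f = 0) →
        ∀ n : ℕ, 1 ≤ n → PsiHat F n d (DS F d q f) = 0) := by
  have main : ∀ n : ℕ, 1 ≤ n → PsiHat F n d (DS F d q f) = Dq F n d q (PsiHat F n d f) := by
    intro n hn
    have hf : f ∈ Algebra.adjoin F
        (MvPolynomial.X '' {v : ℕ+ × WClsH d |
          ∀ l ∈ (Quot.out v.2).1, letterLevel l ≤ (q : ℕ) - 1}) := by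
      rw [← MvPolynomial.supported_eq_adjoin_X]
      refine (MvPolynomial.mem_supported).mpr ?_
      intro v hv
      obtain ⟨u, hu, hv'⟩ := (MvPolynomial.mem_vars v).mp hv
      exact fun l hl => hlev u hu v hv' l hl
    refine Algebra.adjoin_induction
      (p := fun x _ => PsiHat F n d (DS F d q x) = Dq F n d q (PsiHat F n d x))
      ?_ ?_ ?_ ?_ hf
    · -- mem
      intro x hx
      obtain ⟨v, hv, rfl⟩ := hx
      have hv' : ∀ l ∈ (Quot.out v.2).1, letterLevel l ≤ (q:ℕ) - 1 := hv
      rw [DS, MvPolynomial.mkDerivation_X, DqDer_apply, PsiHat_X]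
      set t := ((v.1 : ℕ+) : ℕ) with htdef
      have ht : 0 < t := v.1.pos
      set a := (Quot.out v.2).1 with ha
      set A := hWordMat F n d a with hA
      set B := ((derivWords q a).map (hWordMat F n d)).sum with hB
      have hBD : ∀ i j, B i j = (DqDer F n d q) (A i j) := fun i j => by
        rw [hB, ← mapD_hWordMat, Matrix.map_apply]
      have key := deriv_msigma_trunc (DqDer F n d q) A (t := t) ht hn B hBD
      rw [key, dVal, map_sum]
      have hlev2 : ∀ l ∈ a, letterLevel l < (q:ℕ) := by
        intro l hl
        have h1 := hv' l hl
        have h2 := q.pos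
        omega
      have hane : a ≠ [] := (Quot.out v.2).2.1
      refine Finset.sum_congr rfl fun i hi => ?_
      rw [_root_.map_mul, _root_.map_mul, _root_.map_pow, _root_.map_neg, _root_.map_one]
      rw [map_list_sum (PsiHat F n d)]
      have hmap : ((derivWords q a).map (fun w => trW F (wpow a i ++ w))).map (⇑(PsiHat F n d))
          = (derivWords q a).map (fun w => Matrix.trace (A ^ i * hWordMat F n d w)) := by
        rw [List.map_map]
        refine List.map_congr_left fun w hw => ?_
        have hp := prim_derivWord (d := d) (q := q) hane hlev2 hw i
        rw [Function.comp_apply, PsiHat_trW F hn _ hp, hWordMat_append, hWordMat_wpow]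
      rw [hmap, PsiHat_sigVar F hn]
      have hsum : ((derivWords q a).map (fun w => Matrix.trace (A ^ i * hWordMat F n d w))).sum
          = Matrix.trace (A ^ i * B) := by
        rw [hB, matrix_mul_list_sum, Matrix.trace_list_sum, List.map_map, List.map_map]
        rfl
      rw [hsum, show t - i - 1 = t - 1 - i from by omega]
    · -- algebraMap
      intro r
      rw [Derivation.map_algebraMap, map_zero, AlgHom.commutes, DqDer_apply,
        Derivation.map_algebraMap]
    · -- add
      intro x y hx hy ihx ihy
      simp only [DqDer_apply] at ihx ihy ⊢
      rw [map_add, map_add, ihx, ihy, map_add]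
      exact ((DqDer F n d q).map_add _ _).symm
    · -- mul
      intro x y hx hy ihx ihy
      simp only [DqDer_apply] at ihx ihy ⊢
      calc PsiHat F n d (DS F d q (x * y))
          = PsiHat F n d x * PsiHat F n d (DS F d q y)
            + PsiHat F n d y * PsiHat F n d (DS F d q x) := by
            rw [Derivation.leibniz, map_add, smul_eq_mul, smul_eq_mul, _root_.map_mul, _root_.map_mul]
        _ = PsiHat F n d x * DqDer F n d q (PsiHat F n d y)
            + PsiHat F n d y * DqDer F n d q (PsiHat F n d x) := by rw [ihx, ihy]
        _ = DqDer F n d q (PsiHat F n d x * PsiHat F n d y) := by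
            rw [Derivation.leibniz, smul_eq_mul, smul_eq_mul]
        _ = DqDer F n d q (PsiHat F n d (x * y)) :=
            congrArg (DqDer F n d q) (_root_.map_mul (PsiHat F n d) x y).symm
  refine ⟨main, fun h0 n hn => ?_⟩
  rw [main n hn, h0 n hn, DqDer_apply, map_zero]
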